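/- If G is a dead right end and H is a dead left end, then the misère outcome of G + H is: N^- if l(G) = r(H); L^- if l(G) < r(H); R^- if l(G) > r(H), where l denotes left-length and r denotes right-length. -/

import Mathlib

namespace SetTheory

/-- Combinatorial pre-games (removed from Mathlib; reproduced with the old definition). -/
inductive PGame : Type (u + 1)
  | mk : ∀ α β : Type u, (α → PGame) → (β → PGame) → PGame

namespace PGame

def LeftMoves : PGame → Type u
  | mk l _ _ _ => l

def RightMoves : PGame → Type u
  | mk _ r _ _ => r

def moveLeft : ∀ g : PGame, LeftMoves g → PGame
  | mk _l _ L _ => L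

def moveRight : ∀ g : PGame, RightMoves g → PGame
  | mk _ _r _ R => R

inductive IsOption : PGame → PGame → Prop
  | moveLeft {x : PGame} (i : x.LeftMoves) : IsOption (x.moveLeft i) x
  | moveRight {x : PGame} (i : x.RightMoves) : IsOption (x.moveRight i) x

instance : Zero PGame :=
  ⟨⟨PEmpty, PEmpty, PEmpty.elim, PEmpty.elim⟩⟩

def neg : PGame → PGame
  | ⟨l, r, L, R⟩ => ⟨r, l, fun i => neg (R i), fun i => neg (L i)⟩

instance : Neg PGame :=
  ⟨neg⟩

noncomputable instance : Add PGame.{u} :=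
  ⟨fun x y => by
    induction x generalizing y with | mk xl xr _ _ IHxl IHxr => _
    induction y with | mk yl yr yL yR IHyl IHyr => _
    have y := mk yl yr yL yR
    refine ⟨xl ⊕ yl, xr ⊕ yr, Sum.rec ?_ ?_, Sum.rec ?_ ?_⟩
    · exact fun i => IHxl i y
    · exact IHyl
    · exact fun i => IHxr i y
    · exact IHyr⟩

end PGame

end SetTheory

open SetTheory

namespace Misere

/-- `F` is a follower of `G`: reachable from `G` by a (possibly empty) sequence of moves. -/
def Follower (F G : PGame) : Prop := Relation.ReflTransGen PGame.IsOption F G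

def IsLeftEnd (G : PGame) : Prop := IsEmpty G.LeftMoves
def IsRightEnd (G : PGame) : Prop := IsEmpty G.RightMoves

/-- A dead left end: every follower (including itself) is a left end. -/
def DeadLeftEnd (G : PGame) : Prop := ∀ F, Follower F G → IsLeftEnd F
def DeadRightEnd (G : PGame) : Prop := ∀ F, Follower F G → IsRightEnd F
def DeadEnd (G : PGame) : Prop := DeadLeftEnd G ∨ DeadRightEnd G

/-- A game is dead-ending if every end follower is a dead end. -/
def DeadEnding (G : PGame) : Prop :=
  ∀ F, Follower F G → (IsLeftEnd F → DeadLeftEnd F) ∧ (IsRightEnd F → DeadRightEnd F)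

/-- The universe of dead-ending games. -/
def E : Set PGame := {G | DeadEnding G}

/-- `(misereWins G).1` : Left, moving first, wins `G` under misère play;
    `(misereWins G).2` : Right, moving first, wins `G` under misère play. -/
def misereWins : PGame → Prop × Prop
  | PGame.mk l r L R =>
      (IsEmpty l ∨ ∃ i, ¬ (misereWins (L i)).2,
       IsEmpty r ∨ ∃ j, ¬ (misereWins (R j)).1)

def LeftWinsGF (G : PGame) : Prop := (misereWins G).1
def RightWinsGF (G : PGame) : Prop := (misereWins G).2

inductive MOutcome : Type
  | L | N | P | R
deriving DecidableEq

/-- Partial order on misère outcomes: `R` minimal, `L` maximal, `N` and `P` incomparable. -/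
def MOutcome.le : MOutcome → MOutcome → Prop
  | .R, _ => True
  | _, .L => True
  | a, b => a = b

instance : LE MOutcome := ⟨MOutcome.le⟩

/-- The misère outcome of a game. -/
noncomputable def outcome (G : PGame) : MOutcome := by
  classical
  exact if LeftWinsGF G then (if RightWinsGF G then .N else .L)
        else (if RightWinsGF G then .R else .P)

/-- `G ≡ H (mod U)`. -/
def equivMod (U : Set PGame) (G H : PGame) : Prop :=
  ∀ X ∈ U, outcome (G + X) = outcome (H + X)

/-- `G ≧ H (mod U)`. -/
def geMod (U : Set PGame) (G H : PGame) : Prop :=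
  ∀ X ∈ U, outcome (H + X) ≤ outcome (G + X)

/-- `LeftChain G n`: there is a sequence of `n` consecutive Left moves from `G`
ending at the zero position. -/
inductive LeftChain : PGame → ℕ → Prop
  | zero (G : PGame) : IsLeftEnd G → IsRightEnd G → LeftChain G 0
  | succ (G : PGame) (i : G.LeftMoves) (n : ℕ) :
      LeftChain (G.moveLeft i) n → LeftChain G (n + 1)

inductive RightChain : PGame → ℕ → Prop
  | zero (G : PGame) : IsLeftEnd G → IsRightEnd G → RightChain G 0
  | succ (G : PGame) (j : G.RightMoves) (n : ℕ) :
      RightChain (G.moveRight j) n → RightChain G (n + 1)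

/-- Left-length: minimum number of consecutive Left moves needed to reach zero. -/
noncomputable def leftLength (G : PGame) : ℕ := sInf {n | LeftChain G n}

/-- Right-length: minimum number of consecutive Right moves needed to reach zero. -/
noncomputable def rightLength (G : PGame) : ℕ := sInf {n | RightChain G n}

/-- Normal-play canonical form of a nonnegative integer. -/
def natGame : ℕ → PGame
  | 0 => 0
  | n + 1 => PGame.mk PUnit PEmpty (fun _ => natGame n) PEmpty.elim

/-- Normal-play canonical form of an integer (negatives are conjugates). -/
def intGame (n : ℤ) : PGame :=
  if 0 ≤ n then natGame n.toNat else -natGame (-n).toNat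

/-- Normal-play canonical form of the dyadic rational `m / 2 ^ j`. -/
def dyadicGame : ℤ → ℕ → PGame
  | m, 0 => intGame m
  | m, j + 1 =>
      if m % 2 = 0 then dyadicGame (m / 2) j
      else PGame.mk PUnit PUnit (fun _ => dyadicGame ((m - 1) / 2) j)
            (fun _ => dyadicGame ((m + 1) / 2) j)

/-- The closure of dead ends: finite disjunctive sums of dead ends. -/
def DeadEndClosure : Set PGame :=
  {G | ∃ l : List PGame, (∀ x ∈ l, DeadEnd x) ∧ G = l.sum}

end Misere

namespace SetTheory.PGame

@[elab_as_elim]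
noncomputable def moveRecOn {C : PGame → Sort*} (x : PGame)
    (IH : ∀ y : PGame, (∀ i, C (y.moveLeft i)) → (∀ j, C (y.moveRight j)) → C y) : C x :=
  x.recOn fun yl yr yL yR => IH (mk yl yr yL yR)

theorem wf_isOption : WellFounded IsOption :=
  ⟨fun x => moveRecOn x fun x IHl IHr => Acc.intro x fun y h => by
    cases h with
    | moveLeft i => exact IHl i
    | moveRight j => exact IHr j⟩

instance : WellFoundedRelation PGame := ⟨Relation.TransGen IsOption, wf_isOption.transGen⟩

theorem leftMoves_add (x y : PGame) : (x + y).LeftMoves = (x.LeftMoves ⊕ y.LeftMoves) := by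
  cases x; cases y; rfl

theorem rightMoves_add (x y : PGame) : (x + y).RightMoves = (x.RightMoves ⊕ y.RightMoves) := by
  cases x; cases y; rfl

def toLeftMovesAdd {x y : PGame} : x.LeftMoves ⊕ y.LeftMoves ≃ (x + y).LeftMoves :=
  Equiv.cast (leftMoves_add x y).symm

def toRightMovesAdd {x y : PGame} : x.RightMoves ⊕ y.RightMoves ≃ (x + y).RightMoves :=
  Equiv.cast (rightMoves_add x y).symm

theorem isEmpty_leftMoves_add (x y : PGame) [IsEmpty x.LeftMoves] [IsEmpty y.LeftMoves] :
    IsEmpty (x + y).LeftMoves :=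
  ⟨fun k => (toLeftMovesAdd.symm k).elim isEmptyElim isEmptyElim⟩

theorem isEmpty_rightMoves_add (x y : PGame) [IsEmpty x.RightMoves] [IsEmpty y.RightMoves] :
    IsEmpty (x + y).RightMoves :=
  ⟨fun k => (toRightMovesAdd.symm k).elim isEmptyElim isEmptyElim⟩

theorem add_moveLeft_inl {x : PGame} (y : PGame) (i : x.LeftMoves) :
    (x + y).moveLeft (toLeftMovesAdd (Sum.inl i)) = x.moveLeft i + y := by
  cases x; cases y; rfl

theorem add_moveRight_inr (x : PGame) {y : PGame} (i : y.RightMoves) :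
    (x + y).moveRight (toRightMovesAdd (Sum.inr i)) = x + y.moveRight i := by
  cases x; cases y; rfl

theorem leftMoves_add_cases {x y : PGame} (k) {P : (x + y).LeftMoves → Prop}
    (hl : ∀ i, P <| toLeftMovesAdd (Sum.inl i)) (hr : ∀ i, P <| toLeftMovesAdd (Sum.inr i)) :
    P k := by
  rw [← toLeftMovesAdd.apply_symm_apply k]
  rcases toLeftMovesAdd.symm k with i | i
  · exact hl i
  · exact hr i

theorem rightMoves_add_cases {x y : PGame} (k) {P : (x + y).RightMoves → Prop}
    (hl : ∀ i, P <| toRightMovesAdd (Sum.inl i)) (hr : ∀ i, P <| toRightMovesAdd (Sum.inr i)) :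
    P k := by
  rw [← toRightMovesAdd.apply_symm_apply k]
  rcases toRightMovesAdd.symm k with i | i
  · exact hl i
  · exact hr i

end SetTheory.PGame

namespace Misere

theorem follower_moveLeft (G : PGame) (i) : Follower (G.moveLeft i) G :=
  Relation.ReflTransGen.single (PGame.IsOption.moveLeft i)

theorem follower_moveRight (G : PGame) (j) : Follower (G.moveRight j) G :=
  Relation.ReflTransGen.single (PGame.IsOption.moveRight j)

theorem DeadRightEnd.moveLeft {G : PGame} (h : DeadRightEnd G) (i) :
    DeadRightEnd (G.moveLeft i) :=
  fun F hF => h F (Relation.ReflTransGen.trans hF (follower_moveLeft G i))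

theorem DeadLeftEnd.moveRight {G : PGame} (h : DeadLeftEnd G) (j) :
    DeadLeftEnd (G.moveRight j) :=
  fun F hF => h F (Relation.ReflTransGen.trans hF (follower_moveRight G j))

theorem DeadRightEnd.isRightEnd' {G : PGame} (h : DeadRightEnd G) :
    IsEmpty G.RightMoves := h G Relation.ReflTransGen.refl

theorem DeadLeftEnd.isLeftEnd' {G : PGame} (h : DeadLeftEnd G) :
    IsEmpty G.LeftMoves := h G Relation.ReflTransGen.refl

theorem exists_leftChain : ∀ (G : PGame), DeadRightEnd G → ∃ n, LeftChain G n := by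
  intro G
  induction G using PGame.moveRecOn with
  | _ G IHl IHr =>
    intro hG
    by_cases h : IsEmpty G.LeftMoves
    · exact ⟨0, .zero G h hG.isRightEnd'⟩
    · obtain ⟨i⟩ := not_isEmpty_iff.mp h
      obtain ⟨n, hn⟩ := IHl i (hG.moveLeft i)
      exact ⟨n + 1, .succ G i n hn⟩

theorem exists_rightChain : ∀ (G : PGame), DeadLeftEnd G → ∃ n, RightChain G n := by
  intro G
  induction G using PGame.moveRecOn with
  | _ G IHl IHr =>
    intro hG
    by_cases h : IsEmpty G.RightMoves
    · exact ⟨0, .zero G hG.isLeftEnd' h⟩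
    · obtain ⟨j⟩ := not_isEmpty_iff.mp h
      obtain ⟨n, hn⟩ := IHr j (hG.moveRight j)
      exact ⟨n + 1, .succ G j n hn⟩

theorem leftChain_leftLength {G : PGame} (hG : DeadRightEnd G) :
    LeftChain G (leftLength G) := Nat.sInf_mem (exists_leftChain G hG)

theorem rightChain_rightLength {G : PGame} (hG : DeadLeftEnd G) :
    RightChain G (rightLength G) := Nat.sInf_mem (exists_rightChain G hG)

theorem leftLength_le {G : PGame} {n : ℕ} (h : LeftChain G n) : leftLength G ≤ n :=
  Nat.sInf_le h

theorem rightLength_le {G : PGame} {n : ℕ} (h : RightChain G n) : rightLength G ≤ n :=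
  Nat.sInf_le h

theorem leftLength_eq_zero {G : PGame} (hG : DeadRightEnd G)
    (h : IsEmpty G.LeftMoves) : leftLength G = 0 :=
  Nat.eq_zero_of_le_zero (leftLength_le (.zero G h hG.isRightEnd'))

theorem rightLength_eq_zero {G : PGame} (hG : DeadLeftEnd G)
    (h : IsEmpty G.RightMoves) : rightLength G = 0 :=
  Nat.eq_zero_of_le_zero (rightLength_le (.zero G hG.isLeftEnd' h))

theorem LeftChain.exists_of_ne {G : PGame} {m : ℕ} (h : LeftChain G m)
    (hne : ¬ IsEmpty G.LeftMoves) :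
    ∃ i n, LeftChain (G.moveLeft i) n ∧ m = n + 1 := by
  cases h with
  | zero _ hl _ => exact absurd hl hne
  | succ _ i n hn => exact ⟨i, n, hn, rfl⟩

theorem RightChain.exists_of_ne {G : PGame} {m : ℕ} (h : RightChain G m)
    (hne : ¬ IsEmpty G.RightMoves) :
    ∃ j n, RightChain (G.moveRight j) n ∧ m = n + 1 := by
  cases h with
  | zero _ _ hr => exact absurd hr hne
  | succ _ j n hn => exact ⟨j, n, hn, rfl⟩

theorem leftLength_le_iff {G : PGame} (hG : DeadRightEnd G)
    (hne : ¬ IsEmpty G.LeftMoves) (r : ℕ) :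
    leftLength G ≤ r ↔ ∃ i, leftLength (G.moveLeft i) < r := by
  constructor
  · intro hle
    obtain ⟨i, n, hn, hm⟩ := (leftChain_leftLength hG).exists_of_ne hne
    have := leftLength_le hn
    exact ⟨i, by omega⟩
  · rintro ⟨i, hi⟩
    have h1 : LeftChain G (leftLength (G.moveLeft i) + 1) :=
      .succ G i _ (leftChain_leftLength (hG.moveLeft i))
    have := leftLength_le h1
    omega

theorem rightLength_le_iff {G : PGame} (hG : DeadLeftEnd G)
    (hne : ¬ IsEmpty G.RightMoves) (r : ℕ) :
    rightLength G ≤ r ↔ ∃ j, rightLength (G.moveRight j) < r := by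
  constructor
  · intro hle
    obtain ⟨j, n, hn, hm⟩ := (rightChain_rightLength hG).exists_of_ne hne
    have := rightLength_le hn
    exact ⟨j, by omega⟩
  · rintro ⟨j, hj⟩
    have h1 : RightChain G (rightLength (G.moveRight j) + 1) :=
      .succ G j _ (rightChain_rightLength (hG.moveRight j))
    have := rightLength_le h1
    omega

theorem leftWinsGF_iff (G : PGame) :
    LeftWinsGF G ↔ (IsEmpty G.LeftMoves ∨ ∃ i, ¬ RightWinsGF (G.moveLeft i)) := by
  cases G with
  | mk l r L R =>
    simp only [LeftWinsGF, RightWinsGF, misereWins]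
    exact Iff.rfl

theorem rightWinsGF_iff (G : PGame) :
    RightWinsGF G ↔ (IsEmpty G.RightMoves ∨ ∃ j, ¬ LeftWinsGF (G.moveRight j)) := by
  cases G with
  | mk l r L R =>
    simp only [LeftWinsGF, RightWinsGF, misereWins]
    exact Iff.rfl

theorem key (G H : PGame) (hG : DeadRightEnd G) (hH : DeadLeftEnd H) :
    (LeftWinsGF (G + H) ↔ leftLength G ≤ rightLength H) ∧
    (RightWinsGF (G + H) ↔ rightLength H ≤ leftLength G) := by
  constructor
  · rw [leftWinsGF_iff]
    by_cases h : IsEmpty G.LeftMoves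
    · have hHl : IsEmpty H.LeftMoves := hH.isLeftEnd'
      have hsum : IsEmpty (G + H).LeftMoves := @PGame.isEmpty_leftMoves_add G H h hHl
      have h0 : leftLength G = 0 := leftLength_eq_zero hG h
      simp [hsum, h0]
    · have hne : ¬ IsEmpty (G + H).LeftMoves := by
        intro he
        obtain ⟨i⟩ := not_isEmpty_iff.mp h
        exact he.false (PGame.toLeftMovesAdd (Sum.inl i))
      rw [leftLength_le_iff hG h]
      constructor
      · rintro (he | ⟨k, hk⟩)
        · exact absurd he hne
        · revert hk
          refine PGame.leftMoves_add_cases (P := fun k => ¬RightWinsGF ((G + H).moveLeft k) → ∃ i, leftLength (G.moveLeft i) < rightLength H) k ?_ ?_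
          · intro i hk
            rw [PGame.add_moveLeft_inl] at hk
            rw [(key (G.moveLeft i) H (hG.moveLeft i) hH).2] at hk
            exact ⟨i, by omega⟩
          · intro j _
            exact (hH.isLeftEnd'.false j).elim
      · rintro ⟨i, hi⟩
        refine Or.inr ⟨PGame.toLeftMovesAdd (Sum.inl i), ?_⟩
        rw [PGame.add_moveLeft_inl]
        rw [(key (G.moveLeft i) H (hG.moveLeft i) hH).2]
        omega
  · rw [rightWinsGF_iff]
    by_cases h : IsEmpty H.RightMoves
    · have hGr : IsEmpty G.RightMoves := hG.isRightEnd'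
      have hsum : IsEmpty (G + H).RightMoves := @PGame.isEmpty_rightMoves_add G H hGr h
      have h0 : rightLength H = 0 := rightLength_eq_zero hH h
      simp [hsum, h0]
    · have hne : ¬ IsEmpty (G + H).RightMoves := by
        intro he
        obtain ⟨j⟩ := not_isEmpty_iff.mp h
        exact he.false (PGame.toRightMovesAdd (Sum.inr j))
      rw [rightLength_le_iff hH h]
      constructor
      · rintro (he | ⟨k, hk⟩)
        · exact absurd he hne
        · revert hk
          refine PGame.rightMoves_add_cases (P := fun k => ¬LeftWinsGF ((G + H).moveRight k) → ∃ j, rightLength (H.moveRight j) < leftLength G) k ?_ ?_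
          · intro i _
            exact (hG.isRightEnd'.false i).elim
          · intro j hk
            rw [PGame.add_moveRight_inr] at hk
            rw [(key G (H.moveRight j) hG (hH.moveRight j)).1] at hk
            exact ⟨j, by omega⟩
      · rintro ⟨j, hj⟩
        refine Or.inr ⟨PGame.toRightMovesAdd (Sum.inr j), ?_⟩
        rw [PGame.add_moveRight_inr]
        rw [(key G (H.moveRight j) hG (hH.moveRight j)).1]
        omega
termination_by (G, H)
decreasing_by
  · exact Prod.Lex.left _ _ (Relation.TransGen.single (PGame.IsOption.moveLeft i))
  · exact Prod.Lex.left _ _ (Relation.TransGen.single (PGame.IsOption.moveLeft i))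
  · exact Prod.Lex.right _ (Relation.TransGen.single (PGame.IsOption.moveRight j))
  · exact Prod.Lex.right _ (Relation.TransGen.single (PGame.IsOption.moveRight j))

end Misere

open Misere SetTheory PGame

/-- outcome of a sum of a dead right end and a dead left end. -/
theorem stmt4 (G H : PGame) (hG : DeadRightEnd G) (hH : DeadLeftEnd H) :
    (leftLength G = rightLength H → outcome (G + H) = MOutcome.N) ∧
    (leftLength G < rightLength H → outcome (G + H) = MOutcome.L) ∧
    (rightLength H < leftLength G → outcome (G + H) = MOutcome.R) := by
  obtain ⟨hL, hR⟩ := key G H hG hH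
  refine ⟨fun he => ?_, fun hlt => ?_, fun hlt => ?_⟩
  · have h1 : LeftWinsGF (G + H) := hL.mpr he.le
    have h2 : RightWinsGF (G + H) := hR.mpr he.ge
    unfold outcome
    rw [if_pos h1, if_pos h2]
  · have h1 : LeftWinsGF (G + H) := hL.mpr hlt.le
    have h2 : ¬ RightWinsGF (G + H) := fun hw => absurd (hR.mp hw) (by omega)
    unfold outcome
    rw [if_pos h1, if_neg h2]
  · have h1 : ¬ LeftWinsGF (G + H) := fun hw => absurd (hL.mp hw) (by omega)
    have h2 : RightWinsGF (G + H) := hR.mpr hlt.le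
    unfold outcome
    rw [if_neg h1, if_pos h2]
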